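/- Let R be a finite index set and, for each r ∈ R, let K_r be a finite index set and f_{r,·}, c_{r,·}, l_{r,·} : K_r → ℝ be functions with f_{r,k} ≥ 0, c_{r,k} ≥ 0, l_{r,k} ≥ 0 for all k, and ∑_{k∈K_r} f_{r,k} = 1. Let W_r := ∑_{k∈K_r} f_{r,k}·c_{r,k} and λ_r := ∑_{k ∈ K_r, c_{r,k} ≤ 2·W_r} f_{r,k}, and define the rescaled values f̂_{r,k} := f_{r,k}/λ_r if c_{r,k} ≤ 2·W_r and f̂_{r,k} := 0 otherwise. If d ≥ 0 and ∑_{r∈R} ∑_{k∈K_r} f_{r,k}·l_{r,k} ≤ d, then ∑_{r∈R} ∑_{k∈K_r} f̂_{r,k}·l_{r,k} ≤ 2·d. -/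
import Mathlib


/-- After discarding decompositions whose cost exceeds twice the weighted cost and
rescaling the remaining fractional embedding values, the cumulative fractional load on
any resource of capacity `d` is at most `2 d`. -/
theorem rescaled_load_bound {R : Type*} [Fintype R] {K : R → Type*} [∀ r, Fintype (K r)]
    (f c l : ∀ r, K r → ℝ) (d : ℝ)
    (hf : ∀ r k, 0 ≤ f r k) (hc : ∀ r k, 0 ≤ c r k) (hl : ∀ r k, 0 ≤ l r k)
    (hsum : ∀ r, ∑ k, f r k = 1)
    (hd : 0 ≤ d)
    (hload : ∑ r, ∑ k, f r k * l r k ≤ d) :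
    ∑ r, ∑ k,
        (if c r k ≤ 2 * ∑ j, f r j * c r j then
          f r k / ∑ j ∈ Finset.univ.filter (fun j => c r j ≤ 2 * ∑ j', f r j' * c r j'), f r j
        else 0) * l r k
      ≤ 2 * d := by
  classical
  have key : ∀ r, (1:ℝ)/2 ≤
      ∑ j ∈ Finset.univ.filter (fun j => c r j ≤ 2 * ∑ j', f r j' * c r j'), f r j := by
    intro r
    set W := ∑ j', f r j' * c r j' with hW
    have hW0 : 0 ≤ W := Finset.sum_nonneg fun j _ => mul_nonneg (hf r j) (hc r j)
    set S := Finset.univ.filter (fun j => c r j ≤ 2 * W) with hS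
    set T := Finset.univ.filter (fun j => ¬ c r j ≤ 2 * W) with hT
    have hsplit : ∑ j ∈ S, f r j + ∑ j ∈ T, f r j = 1 := by
      rw [hS, hT, Finset.sum_filter_add_sum_filter_not]; exact hsum r
    rcases eq_or_lt_of_le hW0 with h0 | hpos
    · have hzero : ∀ j ∈ T, f r j = 0 := by
        intro j hj
        have hj' : ¬ c r j ≤ 2 * W := (Finset.mem_filter.mp hj).2
        have hterm : f r j * c r j = 0 :=
          (Finset.sum_eq_zero_iff_of_nonneg
            (fun j _ => mul_nonneg (hf r j) (hc r j))).mp h0.symm j (Finset.mem_univ j)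
        have hcpos : 0 < c r j := by push_neg at hj'; linarith
        rcases mul_eq_zero.mp hterm with h | h
        · exact h
        · exact absurd h (ne_of_gt hcpos)
      have : ∑ j ∈ T, f r j = 0 := Finset.sum_eq_zero hzero
      linarith
    · have h1 : ∑ j ∈ T, (2 * W) * f r j ≤ ∑ j ∈ T, f r j * c r j := by
        apply Finset.sum_le_sum
        intro j hj
        have hj' : ¬ c r j ≤ 2 * W := (Finset.mem_filter.mp hj).2
        push_neg at hj'
        nlinarith [hf r j]
      have h2 : ∑ j ∈ T, f r j * c r j ≤ W := by
        have hsplit2 : ∑ j ∈ S, f r j * c r j + ∑ j ∈ T, f r j * c r j = W := by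
          rw [hS, hT, Finset.sum_filter_add_sum_filter_not]
        have hSnn : 0 ≤ ∑ j ∈ S, f r j * c r j :=
          Finset.sum_nonneg fun j _ => mul_nonneg (hf r j) (hc r j)
        linarith
      have hbound : 2 * W * (∑ j ∈ T, f r j) ≤ W := by
        rw [Finset.mul_sum]; exact le_trans h1 h2
      have hcompl : ∑ j ∈ T, f r j ≤ 1/2 := by nlinarith
      linarith
  have hterm : ∀ r k,
      (if c r k ≤ 2 * ∑ j, f r j * c r j then
          f r k / ∑ j ∈ Finset.univ.filter (fun j => c r j ≤ 2 * ∑ j', f r j' * c r j'), f r j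
        else 0) * l r k ≤ 2 * (f r k * l r k) := by
    intro r k
    set lam := ∑ j ∈ Finset.univ.filter (fun j => c r j ≤ 2 * ∑ j', f r j' * c r j'), f r j
    have hlam : (1:ℝ)/2 ≤ lam := key r
    have hlampos : 0 < lam := by linarith
    split
    · have hdiv : f r k / lam ≤ 2 * f r k := by
        rw [div_le_iff₀ hlampos]
        nlinarith [hf r k]
      have := mul_le_mul_of_nonneg_right hdiv (hl r k)
      linarith
    · nlinarith [mul_nonneg (hf r k) (hl r k)]
  calc ∑ r, ∑ k,
        (if c r k ≤ 2 * ∑ j, f r j * c r j then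
          f r k / ∑ j ∈ Finset.univ.filter (fun j => c r j ≤ 2 * ∑ j', f r j' * c r j'), f r j
        else 0) * l r k
      ≤ ∑ r, ∑ k, 2 * (f r k * l r k) :=
        Finset.sum_le_sum fun r _ => Finset.sum_le_sum fun k _ => hterm r k
    _ = 2 * ∑ r, ∑ k, f r k * l r k := by simp [Finset.mul_sum]
    _ ≤ 2 * d := by linarith
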